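/- Let δ ∈ (0,1), D = ((1+δ)/(1−δ))² − 1, n ≥ 1, and let z_1 ≥ z_2 ≥ ... ≥ z_n ≥ 0 be reals with z_1 > 0. Then there exists an index n* ∈ {1,...,n} such that z_i > (Σ_{j=1}^{n*} z_j)/(n* + D) for all i ≤ n*, and z_i ≤ (Σ_{j=1}^{n*} z_j)/(n* + D) for all i > n*. -/

import Mathlib

theorem stmt4 (δ : ℝ) (hδ : δ ∈ Set.Ioo (0:ℝ) 1) (n : ℕ) (hn : 1 ≤ n)
    (z : ℕ → ℝ)
    (hsort : ∀ i j, 1 ≤ i → i ≤ j → j ≤ n → z j ≤ z i)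
    (hnn : ∀ i, 1 ≤ i → i ≤ n → 0 ≤ z i)
    (hpos : 0 < z 1) :
    ∃ m, 1 ≤ m ∧ m ≤ n ∧
      (∀ i, 1 ≤ i → i ≤ m →
        z i > (∑ j ∈ Finset.Icc 1 m, z j) / ((m : ℝ) + (((1 + δ) / (1 - δ)) ^ 2 - 1))) ∧
      (∀ i, m < i → i ≤ n →
        z i ≤ (∑ j ∈ Finset.Icc 1 m, z j) / ((m : ℝ) + (((1 + δ) / (1 - δ)) ^ 2 - 1))) := by
  classical
  obtain ⟨hδ0, hδ1⟩ := hδ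
  set D : ℝ := ((1 + δ) / (1 - δ)) ^ 2 - 1 with hD
  have h1δ : (0:ℝ) < 1 - δ := by linarith
  have hratio : (1:ℝ) < (1 + δ) / (1 - δ) := by
    rw [lt_div_iff₀ h1δ]; linarith
  have hDpos : 0 < D := by
    have : (1:ℝ) < ((1 + δ) / (1 - δ)) ^ 2 := one_lt_pow₀ hratio two_ne_zero
    rw [hD]; linarith
  set P : ℕ → Prop := fun m => z m > (∑ j ∈ Finset.Icc 1 m, z j) / ((m : ℝ) + D) with hP
  have hP1 : P 1 := by
    simp only [hP, Finset.Icc_self, Finset.sum_singleton, Nat.cast_one]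
    rw [gt_iff_lt, div_lt_iff₀ (by linarith)]
    nlinarith
  set m := Nat.findGreatest P n with hm
  have hm1 : 1 ≤ m := Nat.le_findGreatest hn hP1
  have hmn : m ≤ n := Nat.findGreatest_le n
  have hPm : P m := Nat.findGreatest_spec hn hP1
  have hmD : (0:ℝ) < (m : ℝ) + D := by
    have : (1:ℝ) ≤ (m:ℝ) := by exact_mod_cast hm1
    linarith
  refine ⟨m, hm1, hmn, ?_, ?_⟩
  · intro i hi1 him
    exact lt_of_lt_of_le hPm (hsort i m hi1 him hmn)
  · intro i hmi hin
    have hm1n' : m + 1 ≤ n := Nat.succ_le_of_lt (lt_of_lt_of_le hmi hin)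
    have hnP : ¬ P (m + 1) := Nat.findGreatest_is_greatest (Nat.lt_succ_self m) hm1n'
    have hle : z (m + 1) ≤ (∑ j ∈ Finset.Icc 1 (m+1), z j) / ((m : ℝ) + 1 + D) := by
      have := not_lt.mp hnP
      simpa [hP, Nat.cast_add, Nat.cast_one, add_assoc, add_comm, add_left_comm] using this
    have hsum : (∑ j ∈ Finset.Icc 1 (m+1), z j) = (∑ j ∈ Finset.Icc 1 m, z j) + z (m+1) := by
      rw [Finset.sum_Icc_succ_top (Nat.le_succ_of_le hm1)]
    have hkey : z (m + 1) ≤ (∑ j ∈ Finset.Icc 1 m, z j) / ((m : ℝ) + D) := by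
      rw [le_div_iff₀ hmD]
      have h2 : z (m+1) * ((m:ℝ) + 1 + D) ≤ (∑ j ∈ Finset.Icc 1 m, z j) + z (m+1) := by
        rw [← hsum]
        exact (le_div_iff₀ (by linarith)).mp hle
      nlinarith
    calc z i ≤ z (m + 1) := hsort (m+1) i (Nat.le_succ_of_le hm1) hmi hin
      _ ≤ _ := hkey
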